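/- With the additional adjoint boundary conditions σ(x₀,t) = −(Aᵀ)^{-1}(x₀,t)ℰ(x₀,t) and σ(x_L,t) = (Aᵀ)^{-1}(x_L,t)ℰ(x_L,t), where Aᵀ(x₀,t) and Aᵀ(x_L,t) are invertible, the boundary term equals ∫₀^T Ũᵀℰ(x_L,t) dt + ∫₀^T Ũᵀℰ(x₀,t) dt; hence ∫₀^T∫_{x₀}^{x_L} σᵀ G dx dt = ∫₀^T (Ũᵀℰ)(x₀,t) + (Ũᵀℰ)(x_L,t) dt. -/

import Mathlib

open Matrix intervalIntegral MeasureTheory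

lemma aux_swap (f : ℝ → ℝ → ℝ) (hf : Continuous fun p : ℝ × ℝ => f p.1 p.2)
    {a b c d : ℝ} (hab : a ≤ b) (hcd : c ≤ d) :
    ∫ t in a..b, ∫ x in c..d, f x t = ∫ x in c..d, ∫ t in a..b, f x t := by
  rw [intervalIntegral.integral_of_le hab, intervalIntegral.integral_of_le hcd]
  simp_rw [intervalIntegral.integral_of_le hcd, intervalIntegral.integral_of_le hab]
  apply MeasureTheory.integral_integral_swap
  rw [Measure.prod_restrict, ← Measure.volume_eq_prod]
  refine (((hf.comp continuous_swap).continuousOn.integrableOn_compact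
    (isCompact_Icc (a := (a, c)) (b := (b, d)))).mono_set ?_)
  rw [← Set.Icc_prod_Icc]
  exact Set.prod_mono Set.Ioc_subset_Icc_self Set.Ioc_subset_Icc_self

lemma aux_hasDerivAt_dot {m : ℕ} {f g : ℝ → Fin m → ℝ} {f' g' : Fin m → ℝ} {t : ℝ}
    (hf : HasDerivAt f f' t) (hg : HasDerivAt g g' t) :
    HasDerivAt (fun s => f s ⬝ᵥ g s) (f' ⬝ᵥ g t + f t ⬝ᵥ g') t := by
  simp only [dotProduct]
  rw [← Finset.sum_add_distrib]
  exact HasDerivAt.fun_sum fun i _ => ((hasDerivAt_pi.mp hf i).mul (hasDerivAt_pi.mp hg i))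

lemma aux_sliceT (H : ℝ × ℝ → ℝ) (hH : ContDiff ℝ 1 H) (x t : ℝ) :
    HasDerivAt (fun s => H (x, s)) (fderiv ℝ H (x, t) (0, 1)) t :=
  (hH.differentiable one_ne_zero (x, t)).hasFDerivAt.comp_hasDerivAt t
    ((hasDerivAt_const t x).prodMk (hasDerivAt_id t))

lemma aux_sliceX (H : ℝ × ℝ → ℝ) (hH : ContDiff ℝ 1 H) (x t : ℝ) :
    HasDerivAt (fun y => H (y, t)) (fderiv ℝ H (x, t) (1, 0)) x :=
  (hH.differentiable one_ne_zero (x, t)).hasFDerivAt.comp_hasDerivAt x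
    ((hasDerivAt_id x).prodMk (hasDerivAt_const x t))

/-- With the adjoint boundary conditions `σ(x₀,t) = −(Aᵀ)⁻¹(x₀,t)ℰ(x₀,t)` and
`σ(x_L,t) = (Aᵀ)⁻¹(x_L,t)ℰ(x_L,t)` (with `Aᵀ` invertible at the boundary), the boundary
pairing becomes `∫₀^T∫ σᵀ G dx dt = ∫₀^T (Ũᵀℰ)(x₀,t) + (Ũᵀℰ)(x_L,t) dt`. -/
theorem adjoint_boundary_error_pairing (m : ℕ) (x₀ xL T : ℝ) (hx : x₀ < xL) (hT : 0 < T)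
    (σ Ut G : ℝ → ℝ → (Fin m → ℝ))
    (E₀ EL : ℝ → (Fin m → ℝ))
    (A S C : ℝ → ℝ → Matrix (Fin m) (Fin m) ℝ)
    (hσ : ContDiff ℝ 1 (fun p : ℝ × ℝ => σ p.1 p.2))
    (hUt : ContDiff ℝ 1 (fun p : ℝ × ℝ => Ut p.1 p.2))
    (hG : Continuous (fun p : ℝ × ℝ => G p.1 p.2))
    (hA : ∀ i j, ContDiff ℝ 1 (fun p : ℝ × ℝ => A p.1 p.2 i j))
    (hS : ∀ i j, ContDiff ℝ 1 (fun p : ℝ × ℝ => S p.1 p.2 i j))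
    (hC : ∀ i j, ContDiff ℝ 1 (fun p : ℝ × ℝ => C p.1 p.2 i j))
    (hlin : ∀ x ∈ Set.Icc x₀ xL, ∀ t ∈ Set.Icc (0 : ℝ) T,
      deriv (fun s => Ut x s) t + deriv (fun y => (A y t).mulVec (Ut y t)) x
        - (S x t + C x t).mulVec (Ut x t) = G x t)
    (hinit : ∀ x ∈ Set.Icc x₀ xL, Ut x 0 = 0)
    (hadj : ∀ x ∈ Set.Icc x₀ xL, ∀ t ∈ Set.Icc (0 : ℝ) T,
      deriv (fun s => σ x s) t + (A x t)ᵀ.mulVec (deriv (fun y => σ y t) x)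
        + ((S x t)ᵀ + (C x t)ᵀ).mulVec (σ x t) = 0)
    (hfinal : ∀ x ∈ Set.Icc x₀ xL, σ x T = 0)
    (hinv₀ : ∀ t ∈ Set.Icc (0 : ℝ) T, IsUnit ((A x₀ t)ᵀ))
    (hinvL : ∀ t ∈ Set.Icc (0 : ℝ) T, IsUnit ((A xL t)ᵀ))
    (hbc₀ : ∀ t ∈ Set.Icc (0 : ℝ) T, σ x₀ t = -(((A x₀ t)ᵀ)⁻¹.mulVec (E₀ t)))
    (hbcL : ∀ t ∈ Set.Icc (0 : ℝ) T, σ xL t = ((A xL t)ᵀ)⁻¹.mulVec (EL t)) :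
    (∫ t in (0 : ℝ)..T, ∫ x in x₀..xL, σ x t ⬝ᵥ G x t)
      = ∫ t in (0 : ℝ)..T, (Ut x₀ t ⬝ᵥ E₀ t + Ut xL t ⬝ᵥ EL t) := by
  have hTle : (0 : ℝ) ≤ T := hT.le
  have hxle : x₀ ≤ xL := hx.le
  -- component smoothness
  have hσi : ∀ i, ContDiff ℝ 1 (fun p : ℝ × ℝ => σ p.1 p.2 i) := fun i =>
    (ContinuousLinearMap.proj (R := ℝ) (φ := fun _ : Fin m => ℝ) i).contDiff.comp hσ
  have hUi : ∀ i, ContDiff ℝ 1 (fun p : ℝ × ℝ => Ut p.1 p.2 i) := fun i =>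
    (ContinuousLinearMap.proj (R := ℝ) (φ := fun _ : Fin m => ℝ) i).contDiff.comp hUt
  set Hf : ℝ × ℝ → ℝ := fun p => σ p.1 p.2 ⬝ᵥ Ut p.1 p.2 with hHf_def
  set Ff : ℝ × ℝ → ℝ := fun p => σ p.1 p.2 ⬝ᵥ (A p.1 p.2).mulVec (Ut p.1 p.2) with hFf_def
  have hHf : ContDiff ℝ 1 Hf := by
    rw [hHf_def]; simp only [dotProduct]
    exact ContDiff.sum fun i _ => (hσi i).mul (hUi i)
  have hFf : ContDiff ℝ 1 Ff := by
    rw [hFf_def]; simp only [mulVec, dotProduct]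
    exact ContDiff.sum fun i _ =>
      (hσi i).mul (ContDiff.sum fun j _ => (hA i j).mul (hUi j))
  have hcontHt : Continuous fun p : ℝ × ℝ => fderiv ℝ Hf p (0, 1) :=
    (hHf.continuous_fderiv one_ne_zero).clm_apply continuous_const
  have hcontFx : Continuous fun p : ℝ × ℝ => fderiv ℝ Ff p (1, 0) :=
    (hFf.continuous_fderiv one_ne_zero).clm_apply continuous_const
  -- the key pointwise identity
  have key : ∀ x ∈ Set.Icc x₀ xL, ∀ t ∈ Set.Icc (0 : ℝ) T,
      fderiv ℝ Hf (x, t) (0, 1) + fderiv ℝ Ff (x, t) (1, 0) = σ x t ⬝ᵥ G x t := by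
    intro x hxm t htm
    have hσt : HasDerivAt (fun s => σ x s) (deriv (fun s => σ x s) t) t :=
      (((hσ.comp ((contDiff_const (c := x)).prodMk contDiff_id)).differentiable one_ne_zero) t).hasDerivAt
    have hUtt : HasDerivAt (fun s => Ut x s) (deriv (fun s => Ut x s) t) t :=
      (((hUt.comp ((contDiff_const (c := x)).prodMk contDiff_id)).differentiable one_ne_zero) t).hasDerivAt
    have hσx : HasDerivAt (fun y => σ y t) (deriv (fun y => σ y t) x) x :=
      (((hσ.comp (contDiff_id.prodMk (contDiff_const (c := t)))).differentiable one_ne_zero) x).hasDerivAt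
    have hKc : ContDiff ℝ 1 (fun y => (A y t).mulVec (Ut y t)) := by
      apply contDiff_pi.mpr; intro i
      simp only [mulVec, dotProduct]
      exact ContDiff.sum fun j _ =>
        ((hA i j).comp (contDiff_id.prodMk (contDiff_const (c := t)))).mul
          ((hUi j).comp (contDiff_id.prodMk (contDiff_const (c := t))))
    have hK : HasDerivAt (fun y => (A y t).mulVec (Ut y t))
        (deriv (fun y => (A y t).mulVec (Ut y t)) x) x :=
      ((hKc.differentiable one_ne_zero) x).hasDerivAt
    have h1 : fderiv ℝ Hf (x, t) (0, 1)
        = deriv (fun s => σ x s) t ⬝ᵥ Ut x t + σ x t ⬝ᵥ deriv (fun s => Ut x s) t :=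
      (aux_sliceT Hf hHf x t).unique (aux_hasDerivAt_dot hσt hUtt)
    have h2 : fderiv ℝ Ff (x, t) (1, 0)
        = deriv (fun y => σ y t) x ⬝ᵥ (A x t).mulVec (Ut x t)
          + σ x t ⬝ᵥ deriv (fun y => (A y t).mulVec (Ut y t)) x :=
      (aux_sliceX Ff hFf x t).unique (aux_hasDerivAt_dot hσx hK)
    rw [h1, h2]
    have hlin' := hlin x hxm t htm
    have hadj' := hadj x hxm t htm
    have ha : deriv (fun s => σ x s) t
        = -((A x t)ᵀ.mulVec (deriv (fun y => σ y t) x))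
          - ((S x t)ᵀ + (C x t)ᵀ).mulVec (σ x t) := by
      linear_combination hadj'
    have hu : deriv (fun s => Ut x s) t + deriv (fun y => (A y t).mulVec (Ut y t)) x
        = G x t + (S x t + C x t).mulVec (Ut x t) := by
      linear_combination hlin'
    have e1 : (A x t)ᵀ.mulVec (deriv (fun y => σ y t) x) ⬝ᵥ Ut x t
        = deriv (fun y => σ y t) x ⬝ᵥ (A x t).mulVec (Ut x t) := by
      rw [Matrix.mulVec_transpose, Matrix.dotProduct_mulVec]
    have e2 : ((S x t)ᵀ + (C x t)ᵀ).mulVec (σ x t) ⬝ᵥ Ut x t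
        = σ x t ⬝ᵥ (S x t + C x t).mulVec (Ut x t) := by
      rw [← Matrix.transpose_add, Matrix.mulVec_transpose, Matrix.dotProduct_mulVec]
    have hu' : σ x t ⬝ᵥ deriv (fun s => Ut x s) t
          + σ x t ⬝ᵥ deriv (fun y => (A y t).mulVec (Ut y t)) x
        = σ x t ⬝ᵥ G x t + σ x t ⬝ᵥ (S x t + C x t).mulVec (Ut x t) := by
      rw [← dotProduct_add, ← dotProduct_add, hu]
    rw [ha]
    simp only [sub_dotProduct, neg_dotProduct] at *
    linarith [e1, e2, hu']
  -- integration
  have hcontFt : Continuous fun t : ℝ => Ff (xL, t) - Ff (x₀, t) :=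
    ((hFf.continuous).comp (continuous_const.prodMk continuous_id)).sub
      ((hFf.continuous).comp (continuous_const.prodMk continuous_id))
  have step1 : (∫ t in (0 : ℝ)..T, ∫ x in x₀..xL, σ x t ⬝ᵥ G x t)
      = ∫ t in (0 : ℝ)..T,
          ((∫ x in x₀..xL, fderiv ℝ Hf (x, t) (0, 1)) + (Ff (xL, t) - Ff (x₀, t))) := by
    apply intervalIntegral.integral_congr
    intro t ht
    rw [Set.uIcc_of_le hTle] at ht
    show (∫ x in x₀..xL, σ x t ⬝ᵥ G x t) = _
    have hcg : (∫ x in x₀..xL, σ x t ⬝ᵥ G x t)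
        = ∫ x in x₀..xL, (fderiv ℝ Hf (x, t) (0, 1) + fderiv ℝ Ff (x, t) (1, 0)) := by
      apply intervalIntegral.integral_congr
      intro x hx'
      rw [Set.uIcc_of_le hxle] at hx'
      exact (key x hx' t ht).symm
    have hi1 : IntervalIntegrable (fun x => fderiv ℝ Hf (x, t) (0, 1)) volume x₀ xL :=
      Continuous.intervalIntegrable
        (by exact hcontHt.comp (continuous_id.prodMk continuous_const)) _ _
    have hi2 : IntervalIntegrable (fun x => fderiv ℝ Ff (x, t) (1, 0)) volume x₀ xL :=
      Continuous.intervalIntegrable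
        (by exact hcontFx.comp (continuous_id.prodMk continuous_const)) _ _
    rw [hcg, intervalIntegral.integral_add hi1 hi2,
      intervalIntegral.integral_eq_sub_of_hasDerivAt (fun x _ => aux_sliceX Ff hFf x t) hi2]
  have hI1 : IntervalIntegrable (fun t => ∫ x in x₀..xL, fderiv ℝ Hf (x, t) (0, 1))
      volume 0 T := by
    apply Continuous.intervalIntegrable
    exact intervalIntegral.continuous_parametric_intervalIntegral_of_continuous'
      (f := fun t x => fderiv ℝ Hf (x, t) (0, 1)) (hcontHt.comp continuous_swap) x₀ xL
  have hzero : (∫ t in (0 : ℝ)..T, ∫ x in x₀..xL, fderiv ℝ Hf (x, t) (0, 1)) = 0 := by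
    rw [aux_swap (fun x t => fderiv ℝ Hf (x, t) (0, 1)) hcontHt hTle hxle]
    have hz : ∀ x ∈ Set.uIcc x₀ xL, (∫ t in (0 : ℝ)..T, fderiv ℝ Hf (x, t) (0, 1))
        = (fun _ : ℝ => (0 : ℝ)) x := by
      intro x hx'
      have hi3 : IntervalIntegrable (fun s => fderiv ℝ Hf (x, s) (0, 1)) volume 0 T :=
        Continuous.intervalIntegrable
          (by exact hcontHt.comp (continuous_const.prodMk continuous_id)) _ _
      rw [intervalIntegral.integral_eq_sub_of_hasDerivAt (fun t _ => aux_sliceT Hf hHf x t) hi3]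
      rw [Set.uIcc_of_le hxle] at hx'
      show Hf (x, T) - Hf (x, 0) = 0
      rw [hHf_def]
      simp [hfinal x hx', hinit x hx']
    rw [intervalIntegral.integral_congr hz, intervalIntegral.integral_const]
    simp
  have hbdry : (∫ t in (0 : ℝ)..T, (Ff (xL, t) - Ff (x₀, t)))
      = ∫ t in (0 : ℝ)..T, (Ut x₀ t ⬝ᵥ E₀ t + Ut xL t ⬝ᵥ EL t) := by
    apply intervalIntegral.integral_congr
    intro t ht
    rw [Set.uIcc_of_le hTle] at ht
    show σ xL t ⬝ᵥ (A xL t).mulVec (Ut xL t) - σ x₀ t ⬝ᵥ (A x₀ t).mulVec (Ut x₀ t) = _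
    rw [hbcL t ht, hbc₀ t ht]
    have hL : ((A xL t)ᵀ)⁻¹.mulVec (EL t) ⬝ᵥ (A xL t).mulVec (Ut xL t) = Ut xL t ⬝ᵥ EL t := by
      rw [Matrix.dotProduct_mulVec, ← Matrix.mulVec_transpose, Matrix.mulVec_mulVec,
        Matrix.mul_nonsing_inv _ ((Matrix.isUnit_iff_isUnit_det _).mp (hinvL t ht)),
        Matrix.one_mulVec, dotProduct_comm]
    have h0 : ((A x₀ t)ᵀ)⁻¹.mulVec (E₀ t) ⬝ᵥ (A x₀ t).mulVec (Ut x₀ t) = Ut x₀ t ⬝ᵥ E₀ t := by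
      rw [Matrix.dotProduct_mulVec, ← Matrix.mulVec_transpose, Matrix.mulVec_mulVec,
        Matrix.mul_nonsing_inv _ ((Matrix.isUnit_iff_isUnit_det _).mp (hinv₀ t ht)),
        Matrix.one_mulVec, dotProduct_comm]
    rw [neg_dotProduct, hL, h0]
    ring
  rw [step1, intervalIntegral.integral_add hI1 (hcontFt.intervalIntegrable _ _), hzero, hbdry,
    zero_add]
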